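/- arXiv:1505.04187 — 2 statements merged into one kernel-verified Lean document; each statement's English description precedes it below -/
import Mathlib

section
/- Let φ : X → H be weakly measurable and μ-total. Then C_φ : H → V_φ(X,μ)*, defined by (C_φ f)([ξ]_φ) := ∫_X ξ(x)⟨φ(x),f⟩ dμ(x), is an isometric isomorphism of H onto the dual space V_φ(X,μ)* (with the dual norm ‖·‖_{φ*}). -/
open MeasureTheory Filter Topology
open scoped Classical ENNReal NNReal

noncomputable section

variable {H : Type*} [NormedAddCommGroup H] [InnerProductSpace ℂ H] [CompleteSpace H]
  [TopologicalSpace.SeparableSpace H]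
variable {X : Type*} [TopologicalSpace X] [LocallyCompactSpace X] [MeasurableSpace X]
  [BorelSpace X]

/-- Notation for the Mathlib inner product (conjugate-linear in the first slot);
the paper's inner product `⟨f, g⟩` (linear in the first slot) is `⟪g, f⟫`. -/
local notation "⟪" x ", " y "⟫" => @inner ℂ _ _ x y

/-- `φ : X → H` is weakly measurable: `x ↦ ⟨f, φ x⟩` is measurable for every `f ∈ H`. -/
def WeaklyMeasurable (φ : X → H) : Prop :=
  ∀ f : H, Measurable fun x => ⟪φ x, f⟫

/-- `ξ ∈ 𝒱_φ(X,μ)`: `ξ` is measurable, the integral `∫ ξ(x) ⟨φ(x), g⟩ dμ(x)` exists for all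
`g ∈ H`, and it defines a bounded conjugate-linear functional of `g`. -/
def MemV (μ : Measure X) (φ : X → H) (ξ : X → ℂ) : Prop :=
  Measurable ξ ∧ (∀ g : H, Integrable (fun x => ξ x * ⟪g, φ x⟫) μ) ∧
    ∃ c : ℝ, ∀ g : H, ‖∫ x, ξ x * ⟪g, φ x⟫ ∂μ‖ ≤ c * ‖g‖

/-- The map `T_φ : 𝒱_φ(X,μ) → H`, determined weakly by
`⟨T_φ ξ, g⟩ = ∫ ξ(x) ⟨φ(x), g⟩ dμ(x)` for all `g ∈ H` (junk value `0` off `𝒱_φ`). -/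
def Tmap (μ : Measure X) (φ : X → H) (ξ : X → ℂ) : H :=
  if h : MemV μ φ ξ then
    have key : ∀ g : H, Integrable (fun x => (starRingEnd ℂ) (ξ x) * ⟪φ x, g⟫) μ := by
      intro g
      have h2 : Integrable (fun x => (RCLike.conjLIE : ℂ ≃ₗᵢ[ℝ] ℂ) (ξ x * ⟪g, φ x⟫)) μ :=
        ((RCLike.conjLIE : ℂ ≃ₗᵢ[ℝ] ℂ).integrable_comp_iff).2 (h.2.1 g)
      simpa [RCLike.conjLIE_apply, map_mul] using h2
    (InnerProductSpace.toDual ℂ H).symm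
      (LinearMap.mkContinuousOfExistsBound
        { toFun := fun g => ∫ x, (starRingEnd ℂ) (ξ x) * ⟪φ x, g⟫ ∂μ
          map_add' := fun g g' => by
            simp only [inner_add_right, mul_add]
            exact integral_add (key g) (key g')
          map_smul' := fun c g => by
            simp only [inner_smul_right, RingHom.id_apply]
            calc ∫ x, (starRingEnd ℂ) (ξ x) * (c * ⟪φ x, g⟫) ∂μ
                = ∫ x, c * ((starRingEnd ℂ) (ξ x) * ⟪φ x, g⟫) ∂μ := by
                  simp only [mul_left_comm]
              _ = c * ∫ x, (starRingEnd ℂ) (ξ x) * ⟪φ x, g⟫ ∂μ := integral_const_mul _ _ }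
        (by
          obtain ⟨c, hc⟩ := h.2.2
          refine ⟨c, fun g => ?_⟩
          have he : ∫ x, (starRingEnd ℂ) (ξ x) * ⟪φ x, g⟫ ∂μ
              = (starRingEnd ℂ) (∫ x, ξ x * ⟪g, φ x⟫ ∂μ) := by
            rw [← integral_conj]
            congr 1; funext x
            simp [map_mul]
          simp only [LinearMap.coe_mk, AddHom.coe_mk]
          rw [he, RCLike.norm_conj]
          exact hc g))
  else 0

/-- The norm `‖[ξ]_φ‖_φ = sup_{‖g‖ ≤ 1} |∫ ξ(x) ⟨φ(x), g⟩ dμ(x)|` (computed on a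
representative; it only depends on the class `[ξ]_φ = ξ + Ker T_φ`). -/
def Vnorm (μ : Measure X) (φ : X → H) (ξ : X → ℂ) : ℝ :=
  ⨆ g : {g : H // ‖g‖ ≤ 1}, ‖∫ x, ξ x * ⟪(g : H), φ x⟫ ∂μ‖

/-- The range of `T̂_φ : V_φ(X,μ) → H` (equivalently, of `T_φ` on `𝒱_φ(X,μ)`). -/
def Tran (μ : Measure X) (φ : X → H) : Set H := Tmap μ φ '' {ξ | MemV μ φ ξ}

/-- The analysis coefficient map: `(C_ψ f)(x) = ⟨f, ψ(x)⟩`. -/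
def Cpsi (ψ : X → H) (f : H) : X → ℂ := fun x => ⟪ψ x, f⟫

/-- `φ` is `μ`-total: `Ker C_φ = {0}`, i.e. if `∫ ξ(x) ⟨φ(x), f⟩ dμ(x) = 0` for every
`ξ ∈ 𝒱_φ(X,μ)`, then `f = 0`. -/
def MuTotal (μ : Measure X) (φ : X → H) : Prop :=
  ∀ f : H, (∀ ξ, MemV μ φ ξ → ∫ x, ξ x * ⟪f, φ x⟫ ∂μ = 0) → f = 0

/-- `S : H ≃L[ℂ] H` represents the sesquilinear form `Ω_{ψ,φ}`:
`⟨S f, g⟩ = ∫ ⟨f, ψ(x)⟩ ⟨φ(x), g⟩ dμ(x)` for all `f, g ∈ H`. -/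
def IsAnalysisOp (μ : Measure X) (ψ φ : X → H) (S : H ≃L[ℂ] H) : Prop :=
  ∀ f g : H, ⟪g, S f⟫ = ∫ x, ⟪ψ x, f⟫ * ⟪g, φ x⟫ ∂μ

/-- `(ψ, φ)` is a reproducing pair: both weakly measurable, the form
`Ω_{ψ,φ}(f,g) = ∫ ⟨f,ψ(x)⟩⟨φ(x),g⟩ dμ(x)` is well defined (integrable) and bounded, and the
associated bounded operator `S_{ψ,φ}` has a bounded everywhere-defined inverse. -/
def IsReproducingPair (μ : Measure X) (ψ φ : X → H) : Prop :=
  WeaklyMeasurable ψ ∧ WeaklyMeasurable φ ∧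
    (∀ f g : H, Integrable (fun x => ⟪ψ x, f⟫ * ⟪g, φ x⟫) μ) ∧
    ∃ S : H ≃L[ℂ] H, IsAnalysisOp μ ψ φ S

/-- Completeness of `V_φ(X,μ)` in the norm `‖·‖_φ`, phrased via representatives:
every `‖·‖_φ`-Cauchy sequence of elements of `𝒱_φ(X,μ)` converges in `‖·‖_φ`
to an element of `𝒱_φ(X,μ)`. -/
def VComplete (μ : Measure X) (φ : X → H) : Prop :=
  ∀ ξ : ℕ → X → ℂ, (∀ n, MemV μ φ (ξ n)) →
    (∀ ε : ℝ, 0 < ε → ∃ N, ∀ m ≥ N, ∀ n ≥ N, Vnorm μ φ (ξ m - ξ n) < ε) →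
    ∃ η, MemV μ φ η ∧ Tendsto (fun n => Vnorm μ φ (ξ n - η)) atTop (𝓝 0)

/-- `F` is (induced by) a bounded linear functional on `V_φ(X,μ)`: it is linear on `𝒱_φ(X,μ)`,
constant on the classes of `V_φ(X,μ) = 𝒱_φ(X,μ)/Ker T_φ`, and bounded for `‖·‖_φ`. -/
def IsBddLinearFunctional (μ : Measure X) (φ : X → H) (F : (X → ℂ) → ℂ) : Prop :=
  (∀ ξ η, MemV μ φ ξ → MemV μ φ η → F (ξ + η) = F ξ + F η) ∧
  (∀ (c : ℂ) ξ, MemV μ φ ξ → F (c • ξ) = c * F ξ) ∧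
  (∀ ξ η, MemV μ φ ξ → MemV μ φ η → Tmap μ φ (ξ - η) = 0 → F ξ = F η) ∧
  ∃ c : ℝ, ∀ ξ, MemV μ φ ξ → ‖F ξ‖ ≤ c * Vnorm μ φ ξ

/-- The dual norm `‖F‖_{φ*} = sup_{‖[ξ]_φ‖_φ ≤ 1} |F([ξ]_φ)|`. -/
def DualNorm (μ : Measure X) (φ : X → H) (F : (X → ℂ) → ℂ) : ℝ :=
  ⨆ ξ : {ξ : X → ℂ // MemV μ φ ξ ∧ Vnorm μ φ ξ ≤ 1}, ‖F ξ.1‖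

/-- `V_φ(X,μ)` and `V_ψ(X,μ)` are conjugate dual to each other with respect to the pairing
`⟨⟨ξ, η⟩⟩ = ∫ ξ(x) conj(η(x)) dμ(x)`: the pairing is well defined, each class `[η]_ψ` gives a
bounded linear functional on `V_φ(X,μ)`, and `[η]_ψ ↦ ⟨⟨·, η⟩⟩` is a bijection from `V_ψ(X,μ)`
onto the dual of `V_φ(X,μ)`. -/
def ConjDual (μ : Measure X) (φ ψ : X → H) : Prop :=
  (∀ ξ η, MemV μ φ ξ → MemV μ ψ η →
      Integrable (fun x => ξ x * (starRingEnd ℂ) (η x)) μ) ∧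
  (∀ η, MemV μ ψ η →
      IsBddLinearFunctional μ φ (fun ξ => ∫ x, ξ x * (starRingEnd ℂ) (η x) ∂μ)) ∧
  (∀ η η', MemV μ ψ η → MemV μ ψ η' →
      (∀ ξ, MemV μ φ ξ →
        ∫ x, ξ x * (starRingEnd ℂ) (η x) ∂μ = ∫ x, ξ x * (starRingEnd ℂ) (η' x) ∂μ) →
      Tmap μ ψ (η - η') = 0) ∧
  (∀ F, IsBddLinearFunctional μ φ F →
      ∃ η, MemV μ ψ η ∧ ∀ ξ, MemV μ φ ξ → F ξ = ∫ x, ξ x * (starRingEnd ℂ) (η x) ∂μ)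
section Aux

variable {μ : Measure X} {φ : X → H}

lemma memV_zero (μ : Measure X) (φ : X → H) : MemV μ φ (0 : X → ℂ) := by
  refine ⟨measurable_const, fun g => ?_, ⟨0, fun g => by simp⟩⟩
  simpa using (integrable_zero X ℂ μ)

lemma MemV.add' {ξ η : X → ℂ} (hξ : MemV μ φ ξ) (hη : MemV μ φ η) : MemV μ φ (ξ + η) := by
  obtain ⟨c, hc⟩ := hξ.2.2; obtain ⟨d, hd⟩ := hη.2.2
  refine ⟨hξ.1.add hη.1, fun g => ?_, ⟨c + d, fun g => ?_⟩⟩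
  · refine ((hξ.2.1 g).add (hη.2.1 g)).congr (ae_of_all _ fun x => ?_)
    simp [add_mul]
  · have h : ∫ x, (ξ + η) x * ⟪g, φ x⟫ ∂μ
        = (∫ x, ξ x * ⟪g, φ x⟫ ∂μ) + ∫ x, η x * ⟪g, φ x⟫ ∂μ := by
      rw [← integral_add (hξ.2.1 g) (hη.2.1 g)]
      simp [add_mul]
    rw [h, add_mul]
    exact (norm_add_le _ _).trans (add_le_add (hc g) (hd g))

lemma MemV.smul' {ξ : X → ℂ} (hξ : MemV μ φ ξ) (c : ℂ) : MemV μ φ (c • ξ) := by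
  obtain ⟨b, hb⟩ := hξ.2.2
  refine ⟨hξ.1.const_smul c, fun g => ?_, ⟨‖c‖ * b, fun g => ?_⟩⟩
  · simpa [mul_assoc] using (hξ.2.1 g).const_mul c
  · have h : ∫ x, (c • ξ) x * ⟪g, φ x⟫ ∂μ = c * ∫ x, ξ x * ⟪g, φ x⟫ ∂μ := by
      rw [← integral_const_mul]
      simp [mul_assoc]
    rw [h, norm_mul, mul_assoc]
    exact mul_le_mul_of_nonneg_left (hb g) (norm_nonneg c)

lemma MemV.neg' {ξ : X → ℂ} (hξ : MemV μ φ ξ) : MemV μ φ (-ξ) := by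
  simpa using hξ.smul' (-1)

lemma MemV.sub' {ξ η : X → ℂ} (hξ : MemV μ φ ξ) (hη : MemV μ φ η) : MemV μ φ (ξ - η) := by
  simpa [sub_eq_add_neg] using hξ.add' hη.neg'

lemma inner_Tmap {ξ : X → ℂ} (hξ : MemV μ φ ξ) (g : H) :
    ⟪g, Tmap μ φ ξ⟫ = ∫ x, ξ x * ⟪g, φ x⟫ ∂μ := by
  rw [← inner_conj_symm, Tmap, dif_pos hξ, InnerProductSpace.toDual_symm_apply,
    LinearMap.mkContinuousOfExistsBound_apply]
  simp only [LinearMap.coe_mk, AddHom.coe_mk]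
  rw [← integral_conj]
  congr 1; funext x
  simp [map_mul]

lemma Tmap_add' {ξ η : X → ℂ} (hξ : MemV μ φ ξ) (hη : MemV μ φ η) :
    Tmap μ φ (ξ + η) = Tmap μ φ ξ + Tmap μ φ η := by
  refine ext_inner_left ℂ fun v => ?_
  rw [inner_add_right, inner_Tmap (hξ.add' hη), inner_Tmap hξ, inner_Tmap hη,
    ← integral_add (hξ.2.1 v) (hη.2.1 v)]
  congr 1; funext x; simp [add_mul]

lemma Tmap_sub' {ξ η : X → ℂ} (hξ : MemV μ φ ξ) (hη : MemV μ φ η) :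
    Tmap μ φ (ξ - η) = Tmap μ φ ξ - Tmap μ φ η := by
  refine ext_inner_left ℂ fun v => ?_
  rw [inner_sub_right, inner_Tmap (hξ.sub' hη), inner_Tmap hξ, inner_Tmap hη,
    ← integral_sub (hξ.2.1 v) (hη.2.1 v)]
  congr 1; funext x; simp [sub_mul]

lemma Tmap_smul' {ξ : X → ℂ} (hξ : MemV μ φ ξ) (c : ℂ) :
    Tmap μ φ (c • ξ) = c • Tmap μ φ ξ := by
  refine ext_inner_left ℂ fun v => ?_
  rw [inner_smul_right, inner_Tmap (hξ.smul' c), inner_Tmap hξ, ← integral_const_mul]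
  congr 1; funext x; simp [mul_assoc]

lemma Tmap_zero' (μ : Measure X) (φ : X → H) : Tmap μ φ (0 : X → ℂ) = 0 := by
  refine ext_inner_left ℂ fun v => ?_
  rw [inner_Tmap (memV_zero μ φ)]
  simp

lemma ciSup_inner_norm (v : H) :
    (⨆ g : {g : H // ‖g‖ ≤ 1}, ‖⟪(g : H), v⟫‖) = ‖v‖ := by
  haveI : Nonempty {g : H // ‖g‖ ≤ 1} := ⟨⟨0, by simp⟩⟩
  have hle : ∀ g : {g : H // ‖g‖ ≤ 1}, ‖⟪(g : H), v⟫‖ ≤ ‖v‖ := fun g =>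
    (norm_inner_le_norm _ _).trans
      (by nlinarith [g.2, norm_nonneg v, norm_nonneg (g : H)])
  refine le_antisymm (ciSup_le hle) ?_
  rcases eq_or_ne v 0 with rfl | hv
  · simpa using Real.iSup_nonneg (fun g : {g : H // ‖g‖ ≤ 1} => norm_nonneg ⟪(g : H), (0 : H)⟫)
  · have hb : BddAbove (Set.range fun g : {g : H // ‖g‖ ≤ 1} => ‖⟪(g : H), v⟫‖) :=
      ⟨‖v‖, by rintro _ ⟨g, rfl⟩; exact hle g⟩
    have hvn : (0 : ℝ) < ‖v‖ := norm_pos_iff.2 hv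
    have hmem : ‖((‖v‖⁻¹ : ℂ) • v : H)‖ ≤ 1 := by
      rw [norm_smul]
      simp [abs_of_nonneg (le_of_lt (inv_pos.2 hvn)), inv_mul_cancel₀ hvn.ne']
    have hval : ‖⟪(((‖v‖⁻¹ : ℂ) • v : H)), v⟫‖ = ‖v‖ := by
      simp only [inner_smul_left, inner_self_eq_norm_sq_to_K, norm_mul, map_inv₀,
        RCLike.norm_conj, norm_inv, norm_pow, RCLike.norm_ofReal, abs_norm]
      rw [sq]
      field_simp
      rw [Complex.norm_real, norm_norm, div_self hvn.ne']
    have := le_ciSup hb ⟨(‖v‖⁻¹ : ℂ) • v, hmem⟩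
    rw [hval] at this
    exact this

lemma Vnorm_eq {ξ : X → ℂ} (hξ : MemV μ φ ξ) : Vnorm μ φ ξ = ‖Tmap μ φ ξ‖ := by
  rw [Vnorm, ← ciSup_inner_norm (Tmap μ φ ξ)]
  congr 1; funext g; rw [inner_Tmap hξ]

end Aux

/-- Let `φ : X → H` be weakly measurable and `μ`-total. Then
`C_φ : H → V_φ(X,μ)*`, `(C_φ f)([ξ]_φ) = ∫ ξ(x) ⟨φ(x),f⟩ dμ(x)`, is an isometric isomorphism
of `H` onto the dual space of `V_φ(X,μ)`: each `C_φ f` is a bounded linear functional,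
`‖C_φ f‖_{φ*} = ‖f‖`, and every bounded linear functional arises from a unique `f ∈ H`. -/
theorem statement6 (μ : Measure X) [μ.Regular] (φ : X → H) (hφ : WeaklyMeasurable φ)
    (htot : MuTotal μ φ) :
    (∀ f : H, IsBddLinearFunctional μ φ (fun ξ => ∫ x, ξ x * ⟪f, φ x⟫ ∂μ)) ∧
    (∀ f : H, DualNorm μ φ (fun ξ => ∫ x, ξ x * ⟪f, φ x⟫ ∂μ) = ‖f‖) ∧
    (∀ F : (X → ℂ) → ℂ, IsBddLinearFunctional μ φ F →
      ∃! f : H, ∀ ξ, MemV μ φ ξ → F ξ = ∫ x, ξ x * ⟪f, φ x⟫ ∂μ) := by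
  have part1 : ∀ f : H, IsBddLinearFunctional μ φ (fun ξ => ∫ x, ξ x * ⟪f, φ x⟫ ∂μ) := by
    intro f
    refine ⟨fun ξ η hξ hη => ?_, fun c ξ hξ => ?_, fun ξ η hξ hη h0 => ?_, ⟨‖f‖, fun ξ hξ => ?_⟩⟩
    · show ∫ x, (ξ + η) x * ⟪f, φ x⟫ ∂μ
          = (∫ x, ξ x * ⟪f, φ x⟫ ∂μ) + ∫ x, η x * ⟪f, φ x⟫ ∂μ
      rw [← integral_add (hξ.2.1 f) (hη.2.1 f)]
      congr 1; funext x; simp [add_mul]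
    · show ∫ x, (c • ξ) x * ⟪f, φ x⟫ ∂μ = c * ∫ x, ξ x * ⟪f, φ x⟫ ∂μ
      rw [← integral_const_mul]
      congr 1; funext x; simp [mul_assoc]
    · show ∫ x, ξ x * ⟪f, φ x⟫ ∂μ = ∫ x, η x * ⟪f, φ x⟫ ∂μ
      rw [← inner_Tmap hξ f, ← inner_Tmap hη f]
      have h1 : Tmap μ φ ξ = Tmap μ φ η := by
        have h2 := Tmap_sub' hξ hη
        rw [h0] at h2
        exact sub_eq_zero.1 h2.symm
      rw [h1]
    · show ‖∫ x, ξ x * ⟪f, φ x⟫ ∂μ‖ ≤ ‖f‖ * Vnorm μ φ ξ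
      rw [← inner_Tmap hξ f, Vnorm_eq hξ]
      exact norm_inner_le_norm _ _
  -- the range submodule
  let K : Submodule ℂ H :=
    { carrier := Tran μ φ
      zero_mem' := ⟨0, memV_zero μ φ, Tmap_zero' μ φ⟩
      add_mem' := by
        rintro a b ⟨ξ, hξ, rfl⟩ ⟨η, hη, rfl⟩
        exact ⟨ξ + η, hξ.add' hη, Tmap_add' hξ hη⟩
      smul_mem' := by
        intro c a ha
        obtain ⟨ξ, hξ, rfl⟩ := ha
        exact ⟨c • ξ, hξ.smul' c, Tmap_smul' hξ c⟩ }
  have hmemK : ∀ {ξ}, MemV μ φ ξ → Tmap μ φ ξ ∈ K := fun hξ => ⟨_, hξ, rfl⟩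
  have hdense : K.topologicalClosure = ⊤ := by
    rw [Submodule.topologicalClosure_eq_top_iff, Submodule.eq_bot_iff]
    intro v hv
    refine htot v fun ξ hξ => ?_
    have h1 : ⟪Tmap μ φ ξ, v⟫ = 0 :=
      (Submodule.mem_orthogonal K v).1 hv _ (hmemK hξ)
    have h2 : ⟪v, Tmap μ φ ξ⟫ = 0 := by
      rw [← inner_conj_symm, h1, map_zero]
    rw [← inner_Tmap hξ v]
    exact h2
  haveI hne : Nonempty {ξ : X → ℂ // MemV μ φ ξ ∧ Vnorm μ φ ξ ≤ 1} :=
    ⟨⟨0, memV_zero μ φ, by rw [Vnorm_eq (memV_zero μ φ), Tmap_zero']; simp⟩⟩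
  have part2 : ∀ f : H, DualNorm μ φ (fun ξ => ∫ x, ξ x * ⟪f, φ x⟫ ∂μ) = ‖f‖ := by
    intro f
    have hub : ∀ ξ : {ξ : X → ℂ // MemV μ φ ξ ∧ Vnorm μ φ ξ ≤ 1},
        ‖∫ x, ξ.1 x * ⟪f, φ x⟫ ∂μ‖ ≤ ‖f‖ := by
      rintro ⟨ξ, hξ, h1⟩
      show ‖∫ x, ξ x * ⟪f, φ x⟫ ∂μ‖ ≤ ‖f‖
      rw [← inner_Tmap hξ f]
      calc ‖⟪f, Tmap μ φ ξ⟫‖ ≤ ‖f‖ * ‖Tmap μ φ ξ‖ := norm_inner_le_norm _ _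
        _ ≤ ‖f‖ * 1 :=
            mul_le_mul_of_nonneg_left (by rw [← Vnorm_eq hξ]; exact h1) (norm_nonneg f)
        _ = ‖f‖ := mul_one _
    rw [DualNorm]
    refine le_antisymm (ciSup_le fun ξ => hub ξ) ?_
    rcases eq_or_ne f 0 with rfl | hf
    · simpa using Real.iSup_nonneg
        (fun ξ : {ξ : X → ℂ // MemV μ φ ξ ∧ Vnorm μ φ ξ ≤ 1} =>
          norm_nonneg (∫ x, ξ.1 x * ⟪(0 : H), φ x⟫ ∂μ))
    · have hF : 0 < ‖f‖ := norm_pos_iff.2 hf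
      refine le_of_forall_pos_le_add fun ε hε => ?_
      have hfK : f ∈ closure (K : Set H) := by
        have h : f ∈ K.topologicalClosure := by rw [hdense]; trivial
        exact h
      obtain ⟨v, hvK, hvf⟩ := Metric.mem_closure_iff.1 hfK (ε / 2) (by linarith)
      obtain ⟨ξ₀, hξ₀, hTξ₀⟩ := hvK
      set δ : ℝ := ε / 2 with hδ
      set a : ℝ := ‖f‖ + δ with ha
      have hδ0 : 0 < δ := by rw [hδ]; linarith
      have ha0 : 0 < a := by rw [ha]; linarith
      set ξ : X → ℂ := ((a⁻¹ : ℝ) : ℂ) • ξ₀ with hxi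
      have hξ : MemV μ φ ξ := hξ₀.smul' _
      have hTξ : Tmap μ φ ξ = ((a⁻¹ : ℝ) : ℂ) • v := by
        rw [hxi, Tmap_smul' hξ₀, hTξ₀]
      have hvfd : ‖f - v‖ < δ := by
        rw [← dist_eq_norm]; exact hvf
      have hvb : ‖v‖ ≤ a := by
        have h1 : ‖v‖ - ‖f‖ ≤ ‖v - f‖ := norm_sub_norm_le v f
        rw [norm_sub_rev] at h1
        rw [ha]; linarith
      have hVξ : Vnorm μ φ ξ ≤ 1 := by
        rw [Vnorm_eq hξ, hTξ, norm_smul, Complex.norm_real, Real.norm_eq_abs, abs_inv, abs_of_pos ha0]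
        calc a⁻¹ * ‖v‖ ≤ a⁻¹ * a := by gcongr
          _ = 1 := inv_mul_cancel₀ ha0.ne'
      have hinner : ‖f‖ ^ 2 - ‖f‖ * δ ≤ ‖⟪f, v⟫‖ := by
        have h1 : ⟪f, f⟫ = ⟪f, v⟫ - ⟪f, v - f⟫ := by
          rw [← inner_sub_right, sub_sub_cancel]
        have h2 : ‖⟪f, f⟫‖ ≤ ‖⟪f, v⟫‖ + ‖⟪f, v - f⟫‖ := h1 ▸ norm_sub_le _ _
        have h3 : ‖⟪f, v - f⟫‖ ≤ ‖f‖ * ‖v - f‖ := norm_inner_le_norm _ _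
        have h4 : ‖v - f‖ ≤ δ := by rw [norm_sub_rev]; exact hvfd.le
        have h5 : ‖⟪f, f⟫‖ = ‖f‖ ^ 2 := by
          rw [inner_self_eq_norm_sq_to_K, norm_pow, RCLike.norm_ofReal, abs_norm]
        nlinarith [norm_nonneg f]
      have hbdd : BddAbove (Set.range fun ξ : {ξ : X → ℂ // MemV μ φ ξ ∧ Vnorm μ φ ξ ≤ 1} =>
          ‖∫ x, ξ.1 x * ⟪f, φ x⟫ ∂μ‖) := ⟨‖f‖, by rintro r ⟨ξ, rfl⟩; exact hub ξ⟩
      have hle := le_ciSup hbdd ⟨ξ, hξ, hVξ⟩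
      have hval : a⁻¹ * (‖f‖ ^ 2 - ‖f‖ * δ) ≤ ‖∫ x, ξ x * ⟪f, φ x⟫ ∂μ‖ := by
        rw [← inner_Tmap hξ f, hTξ, inner_smul_right, norm_mul, Complex.norm_real, Real.norm_eq_abs, abs_inv,
          abs_of_pos ha0]
        exact mul_le_mul_of_nonneg_left hinner (by positivity)
      have key : ‖f‖ ≤ a⁻¹ * (‖f‖ ^ 2 - ‖f‖ * δ) + ε := by
        rw [← sub_le_iff_le_add]
        have h6 : (‖f‖ - ε) * a ≤ ‖f‖ ^ 2 - ‖f‖ * δ := by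
          rw [ha, hδ]; nlinarith [hF.le, hε.le]
        calc ‖f‖ - ε = (‖f‖ - ε) * a * a⁻¹ := by field_simp
          _ ≤ (‖f‖ ^ 2 - ‖f‖ * δ) * a⁻¹ :=
              mul_le_mul_of_nonneg_right h6 (inv_nonneg.2 ha0.le)
          _ = a⁻¹ * (‖f‖ ^ 2 - ‖f‖ * δ) := mul_comm _ _
      calc ‖f‖ ≤ a⁻¹ * (‖f‖ ^ 2 - ‖f‖ * δ) + ε := key
        _ ≤ ‖∫ x, ξ x * ⟪f, φ x⟫ ∂μ‖ + ε := by linarith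
        _ ≤ (⨆ ξ : {ξ : X → ℂ // MemV μ φ ξ ∧ Vnorm μ φ ξ ≤ 1},
              ‖∫ x, ξ.1 x * ⟪f, φ x⟫ ∂μ‖) + ε := by
            exact add_le_add_left hle ε
  refine ⟨part1, part2, ?_⟩
  intro F hF
  obtain ⟨c, hc⟩ := hF.2.2.2
  have key : ∀ ξ η, MemV μ φ ξ → MemV μ φ η → Tmap μ φ ξ = Tmap μ φ η → F ξ = F η :=
    fun ξ η hξ hη he => hF.2.2.1 ξ η hξ hη (by rw [Tmap_sub' hξ hη, he, sub_self])
  have hselx : ∀ v : K, ∃ ξ, MemV μ φ ξ ∧ Tmap μ φ ξ = (v : H) := fun v => v.2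
  choose sel hsel1 hsel2 using hselx
  have hadd : ∀ v w : K, F (sel (v + w)) = F (sel v) + F (sel w) := by
    intro v w
    have h1 : F (sel (v + w)) = F (sel v + sel w) :=
      key _ _ (hsel1 _) ((hsel1 v).add' (hsel1 w))
        (by rw [hsel2, Tmap_add' (hsel1 v) (hsel1 w), hsel2, hsel2]; rfl)
    rw [h1, hF.1 _ _ (hsel1 v) (hsel1 w)]
  have hsmul : ∀ (r : ℂ) (v : K), F (sel (r • v)) = r * F (sel v) := by
    intro r v
    have h1 : F (sel (r • v)) = F (r • sel v) :=
      key _ _ (hsel1 _) ((hsel1 v).smul' r)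
        (by rw [hsel2, Tmap_smul' (hsel1 v), hsel2]; rfl)
    rw [h1, hF.2.1 r _ (hsel1 v)]
  let G0 : K →ₗ[ℂ] ℂ :=
    { toFun := fun v => F (sel v)
      map_add' := hadd
      map_smul' := hsmul }
  have hGb : ∃ C : ℝ, ∀ v : K, ‖G0 v‖ ≤ C * ‖v‖ := by
    refine ⟨c, fun v => ?_⟩
    have h1 := hc _ (hsel1 v)
    rw [Vnorm_eq (hsel1 v), hsel2] at h1
    exact h1
  let G : K →L[ℂ] ℂ := G0.mkContinuousOfExistsBound hGb
  obtain ⟨g, hg, -⟩ := exists_extension_norm_eq K G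
  set f := (InnerProductSpace.toDual ℂ H).symm g with hfdef
  have hfor : ∀ ξ, MemV μ φ ξ → F ξ = ∫ x, ξ x * ⟪f, φ x⟫ ∂μ := by
    intro ξ hξ
    have hm : Tmap μ φ ξ ∈ K := hmemK hξ
    have h1 : F ξ = F (sel ⟨Tmap μ φ ξ, hm⟩) := key _ _ hξ (hsel1 _) (by rw [hsel2])
    have h2 : F (sel ⟨Tmap μ φ ξ, hm⟩) = G ⟨Tmap μ φ ξ, hm⟩ := rfl
    have h3 : (G ⟨Tmap μ φ ξ, hm⟩ : ℂ) = g (Tmap μ φ ξ) := (hg ⟨Tmap μ φ ξ, hm⟩).symm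
    have h4 : g (Tmap μ φ ξ) = ⟪f, Tmap μ φ ξ⟫ := by
      rw [hfdef, InnerProductSpace.toDual_symm_apply]
    rw [h1, h2, h3, h4, inner_Tmap hξ f]
  refine ⟨f, hfor, fun f' hf' => ?_⟩
  refine sub_eq_zero.1 (htot (f' - f) fun ξ hξ => ?_)
  have h1 : (fun x => ξ x * ⟪f' - f, φ x⟫)
      = fun x => ξ x * ⟪f', φ x⟫ - ξ x * ⟪f, φ x⟫ := by
    funext x; rw [inner_sub_left]; ring
  rw [h1, integral_sub (hξ.2.1 f') (hξ.2.1 f), ← hf' ξ hξ, ← hfor ξ hξ, sub_self]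
end
end

section
/- Let (ψ,φ) be a reproducing pair of weakly measurable functions X → H such that φ is Bessel, i.e. there is M < ∞ with ∫_X |⟨f,φ(x)⟩|² dμ(x) ≤ M‖f‖² for all f ∈ H, and assume that the orthogonal complement in L²(X,dμ) of Ran C_ψ ∩ L²(X,dμ) is nonzero, where Ran C_ψ := {⟨f,ψ(·)⟩ : f ∈ H}. Then φ is not μ-independent, i.e. there exists a measurable ξ : X → ℂ, not equal to 0 almost everywhere, with ∫_X ξ(x)⟨φ(x),g⟩ dμ(x) = 0 for all g ∈ H. -/
open MeasureTheory Filter Topology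
open scoped Classical ENNReal NNReal

noncomputable section

variable {H : Type*} [NormedAddCommGroup H] [InnerProductSpace ℂ H] [CompleteSpace H]
  [TopologicalSpace.SeparableSpace H]
variable {X : Type*} [TopologicalSpace X] [LocallyCompactSpace X] [MeasurableSpace X]
  [BorelSpace X]

/-- Notation for the Mathlib inner product (conjugate-linear in the first slot);
the paper's inner product `⟨f, g⟩` (linear in the first slot) is `⟪g, f⟫`. -/
local notation "⟪" x ", " y "⟫" => @inner ℂ _ _ x y

/-- Defining property of `Tmap`: `∫ ξ(x) ⟨φ(x), g⟩ dμ(x) = ⟨g, T_φ ξ⟩` for `ξ ∈ 𝒱_φ`. -/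
theorem Tmap_inner (μ : Measure X) (φ : X → H) {ξ : X → ℂ} (hξ : MemV μ φ ξ) (g : H) :
    ∫ x, ξ x * ⟪g, φ x⟫ ∂μ = ⟪g, Tmap μ φ ξ⟫ := by
  have h1 : ⟪Tmap μ φ ξ, g⟫ = ∫ x, (starRingEnd ℂ) (ξ x) * ⟪φ x, g⟫ ∂μ := by
    rw [Tmap, dif_pos hξ]
    exact InnerProductSpace.toDual_symm_apply
  have h2 := congrArg (starRingEnd ℂ) h1
  rw [inner_conj_symm, ← integral_conj] at h2
  rw [h2]
  congr 1
  funext x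
  rw [map_mul, RingHomCompTriple.comp_apply, RingHom.id_apply, inner_conj_symm]

/-- Let `(ψ,φ)` be a reproducing pair with `φ` Bessel
(`∫ |⟨f,φ(x)⟩|² dμ(x) ≤ M‖f‖²`), and assume the orthogonal complement in `L²(X,dμ)` of
`Ran C_ψ ∩ L²(X,dμ)` is nonzero. Then `φ` is not `μ`-independent: there is a measurable
`ξ : X → ℂ` (in `𝒱_φ(X,μ)`), not a.e. `0`, with `∫ ξ(x) ⟨φ(x),g⟩ dμ(x) = 0` for all `g`. -/
theorem statement18 (μ : Measure X) [μ.Regular] (ψ φ : X → H)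
    (h : IsReproducingPair μ ψ φ)
    (hBessel : ∃ M : ℝ≥0, ∀ f : H,
        ∫⁻ x, ((‖⟪φ x, f⟫‖₊ : ℝ≥0∞) ^ 2) ∂μ ≤ (M : ℝ≥0∞) * (‖f‖₊ : ℝ≥0∞) ^ 2)
    (hperp : ∃ F : Lp ℂ 2 μ, F ≠ 0 ∧
        ∀ G : Lp ℂ 2 μ, (∃ f : H, Cpsi ψ f =ᵐ[μ] ⇑G) → ⟪F, G⟫ = 0) :
    ∃ ξ : X → ℂ, MemV μ φ ξ ∧ ¬ ξ =ᵐ[μ] 0 ∧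
      ∀ g : H, ∫ x, ξ x * ⟪g, φ x⟫ ∂μ = 0 := by
  obtain ⟨M, hM⟩ := hBessel
  obtain ⟨F, hF0, hFperp⟩ := hperp
  obtain ⟨hψm, hφm, hint, S, hS⟩ := h
  -- measurable representative of F
  set Fm : X → ℂ := (Lp.aestronglyMeasurable F).mk ⇑F with hFmdef
  have hFae : ⇑F =ᵐ[μ] Fm := (Lp.aestronglyMeasurable F).ae_eq_mk
  have hFmm : Measurable Fm :=
    (Lp.aestronglyMeasurable F).stronglyMeasurable_mk.measurable
  have hFm2 : MemLp Fm 2 μ := (Lp.memLp F).ae_eq hFae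
  -- the coefficient functions of φ
  have hBmeas : ∀ g : H, Measurable fun x => ⟪g, φ x⟫ := by
    intro g
    have : Measurable fun x => (starRingEnd ℂ) ⟪φ x, g⟫ :=
      (continuous_star.measurable).comp (hφm g)
    simpa only [inner_conj_symm] using this
  have hB2 : ∀ g : H, MemLp (fun x => ⟪g, φ x⟫) 2 μ := by
    intro g
    refine ⟨(hBmeas g).aestronglyMeasurable, ?_⟩
    rw [eLpNorm_eq_lintegral_rpow_enorm_toReal two_ne_zero ENNReal.ofNat_ne_top]
    refine ENNReal.rpow_lt_top_of_nonneg (by norm_num) ?_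
    have heq : ∫⁻ x, (‖⟪g, φ x⟫‖₊ : ℝ≥0∞) ^ (2 : ℝ≥0∞).toReal ∂μ
        = ∫⁻ x, (‖⟪φ x, g⟫‖₊ : ℝ≥0∞) ^ 2 ∂μ := by
      congr 1
      funext x
      rw [← inner_conj_symm (φ x) g, RCLike.nnnorm_conj, ENNReal.toReal_ofNat,
        ← ENNReal.rpow_natCast]
      norm_num
    erw [heq]
    exact ((hM g).trans_lt (by
      exact ENNReal.mul_lt_top ENNReal.coe_lt_top (ENNReal.pow_lt_top (n := 2) ENNReal.coe_lt_top))).ne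
  -- L² machinery: A = conj ∘ Fm, Bg = ⟪g, φ ·⟫ as L² elements
  have hA2 : MemLp (fun x => (starRingEnd ℂ) (Fm x)) 2 μ := by
    refine hFm2.congr_norm ((continuous_star.measurable.comp hFmm).aestronglyMeasurable) ?_
    filter_upwards with x
    simp
  set A : Lp ℂ 2 μ := hA2.toLp _ with hAdef
  have hAcoe : ⇑A =ᵐ[μ] fun x => (starRingEnd ℂ) (Fm x) := MemLp.coeFn_toLp hA2
  have hrepr : ∀ g : H, (fun x => ⟪A x, ((hB2 g).toLp _ : Lp ℂ 2 μ) x⟫)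
      =ᵐ[μ] fun x => Fm x * ⟪g, φ x⟫ := by
    intro g
    filter_upwards [hAcoe, MemLp.coeFn_toLp (hB2 g)] with x hx hx'
    rw [RCLike.inner_apply, hx, hx', RingHomCompTriple.comp_apply, RingHom.id_apply, mul_comm]
  have hIntF : ∀ g : H, Integrable (fun x => Fm x * ⟪g, φ x⟫) μ := fun g =>
    (L2.integrable_inner (𝕜 := ℂ) A ((hB2 g).toLp _)).congr (hrepr g)
  have hval : ∀ g : H, ∫ x, Fm x * ⟪g, φ x⟫ ∂μ = ⟪A, (hB2 g).toLp _⟫ := by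
    intro g
    rw [L2.inner_def]
    exact (integral_congr_ae (hrepr g)).symm
  -- norm bound for Bg
  have hBnorm : ∀ g : H, ‖((hB2 g).toLp _ : Lp ℂ 2 μ)‖
      ≤ ((M : ℝ≥0∞) ^ (1/2 : ℝ)).toReal * ‖g‖ := by
    intro g
    rw [Lp.norm_toLp]
    have h1 : eLpNorm (fun x => ⟪g, φ x⟫) 2 μ ≤ (M : ℝ≥0∞) ^ (1/2 : ℝ) * (‖g‖₊ : ℝ≥0∞) := by
      rw [eLpNorm_eq_lintegral_rpow_enorm_toReal two_ne_zero ENNReal.ofNat_ne_top]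
      have heq : ∫⁻ x, (‖⟪g, φ x⟫‖₊ : ℝ≥0∞) ^ (2 : ℝ≥0∞).toReal ∂μ
          = ∫⁻ x, (‖⟪φ x, g⟫‖₊ : ℝ≥0∞) ^ 2 ∂μ := by
        congr 1
        funext x
        rw [← inner_conj_symm (φ x) g, RCLike.nnnorm_conj, ENNReal.toReal_ofNat,
          ← ENNReal.rpow_natCast]
        norm_num
      erw [heq, ENNReal.toReal_ofNat]
      calc (∫⁻ x, (‖⟪φ x, g⟫‖₊ : ℝ≥0∞) ^ 2 ∂μ) ^ (1/2 : ℝ)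
          ≤ ((M : ℝ≥0∞) * (‖g‖₊ : ℝ≥0∞) ^ 2) ^ (1/2 : ℝ) :=
            ENNReal.rpow_le_rpow (hM g) (by norm_num)
        _ = (M : ℝ≥0∞) ^ (1/2 : ℝ) * (‖g‖₊ : ℝ≥0∞) := by
            rw [ENNReal.mul_rpow_of_nonneg _ _ (by norm_num : (0:ℝ) ≤ 1/2)]
            congr 1
            rw [← ENNReal.rpow_natCast (‖g‖₊ : ℝ≥0∞) 2, ← ENNReal.rpow_mul]
            norm_num
    have hfin : (M : ℝ≥0∞) ^ (1/2 : ℝ) * (‖g‖₊ : ℝ≥0∞) ≠ ⊤ :=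
      ENNReal.mul_ne_top (ENNReal.rpow_ne_top_of_nonneg (by norm_num) ENNReal.coe_ne_top)
        ENNReal.coe_ne_top
    calc (eLpNorm (fun x => ⟪g, φ x⟫) 2 μ).toReal
        ≤ ((M : ℝ≥0∞) ^ (1/2 : ℝ) * (‖g‖₊ : ℝ≥0∞)).toReal := ENNReal.toReal_mono hfin h1
      _ = ((M : ℝ≥0∞) ^ (1/2 : ℝ)).toReal * ‖g‖ := by
          rw [ENNReal.toReal_mul]
          simp
  -- Fm ∈ 𝒱_φ
  have hFmMemV : MemV μ φ Fm := by
    refine ⟨hFmm, hIntF, ⟨‖A‖ * ((M : ℝ≥0∞) ^ (1/2 : ℝ)).toReal, fun g => ?_⟩⟩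
    rw [hval g]
    calc ‖⟪A, ((hB2 g).toLp _ : Lp ℂ 2 μ)⟫‖ ≤ ‖A‖ * ‖((hB2 g).toLp _ : Lp ℂ 2 μ)‖ :=
          norm_inner_le_norm _ _
      _ ≤ ‖A‖ * (((M : ℝ≥0∞) ^ (1/2 : ℝ)).toReal * ‖g‖) :=
          mul_le_mul_of_nonneg_left (hBnorm g) (norm_nonneg _)
      _ = ‖A‖ * ((M : ℝ≥0∞) ^ (1/2 : ℝ)).toReal * ‖g‖ := by ring
  -- the element h₀ = T_φ Fm and f = S⁻¹ h₀
  set h0 : H := Tmap μ φ Fm with hh0def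
  have key0 : ∀ g : H, ∫ x, Fm x * ⟪g, φ x⟫ ∂μ = ⟪g, h0⟫ := Tmap_inner μ φ hFmMemV
  set f : H := S.symm h0 with hfdef
  have hSf : ∀ g : H, ∫ x, ⟪ψ x, f⟫ * ⟪g, φ x⟫ ∂μ = ⟪g, h0⟫ := by
    intro g
    have := hS f g
    rw [hfdef, S.apply_symm_apply] at this
    exact this.symm
  -- the witness ξ
  refine ⟨fun x => Fm x - ⟪ψ x, f⟫, ?_, ?_, ?_⟩
  · -- MemV
    have hsplit : ∀ g : H, (fun x => (Fm x - ⟪ψ x, f⟫) * ⟪g, φ x⟫)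
        = fun x => Fm x * ⟪g, φ x⟫ - ⟪ψ x, f⟫ * ⟪g, φ x⟫ := by
      intro g; funext x; ring
    refine ⟨hFmm.sub (hψm f), fun g => ?_, ⟨0, fun g => ?_⟩⟩
    · rw [hsplit g]
      exact (hIntF g).sub (hint f g)
    · have : ∫ x, (Fm x - ⟪ψ x, f⟫) * ⟪g, φ x⟫ ∂μ = 0 := by
        rw [hsplit g, integral_sub (hIntF g) (hint f g), key0 g, hSf g, sub_self]
      rw [this]
      simp
  · -- not a.e. zero
    intro hae
    have hCF : Cpsi ψ f =ᵐ[μ] ⇑F := by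
      filter_upwards [hae, hFae] with x hx hx'
      have : Fm x - ⟪ψ x, f⟫ = 0 := hx
      have h2 : ⟪ψ x, f⟫ = Fm x := by linear_combination -this
      simpa [Cpsi, hx'] using h2
    exact hF0 (inner_self_eq_zero.mp (hFperp F ⟨f, hCF⟩))
  · -- the kernel property
    intro g
    have hsplit : (fun x => (Fm x - ⟪ψ x, f⟫) * ⟪g, φ x⟫)
        = fun x => Fm x * ⟪g, φ x⟫ - ⟪ψ x, f⟫ * ⟪g, φ x⟫ := by
      funext x; ring
    rw [hsplit, integral_sub (hIntF g) (hint f g), key0 g, hSf g, sub_self]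
end
end
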